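/- Let p be a prime, 0 ≤ n < m, k ≥ 1, and let χ1,…,χk be characters mod p^m with χ_k primitive mod p^m. If χ1⋯χk is not induced by any character mod p^{m−n}, then J_{p^n}(χ1,…,χk,p^m) = 0. -/
import Mathlib


open Complex

/-- The generalized Jacobi sum `J_B(χ₁,…,χ_k, q)`. -/
noncomputable def Jsum {q : ℕ} [NeZero q] {k : ℕ}
    (χ : Fin k → DirichletCharacter ℂ q) (B : ZMod q) : ℂ :=
  ∑ x : Fin k → ZMod q, if (∑ i, x i) = B then ∏ i, χ i (x i) else 0

lemma mulchar_prod_apply_coe {R R' : Type*} [CommMonoid R] [CommMonoidWithZero R']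
    {ι : Type*} (s : Finset ι) (χ : ι → MulChar R R') (u : Rˣ) :
    (∏ i ∈ s, χ i) ↑u = ∏ i ∈ s, χ i ↑u := by
  induction s using Finset.cons_induction with
  | empty => simp [MulChar.one_apply_coe]
  | cons a s ha ih => simp [Finset.prod_cons, MulChar.coeToFun_mul, ih]

/-- Here the `k+1 ≥ 1` characters are `χ 0, …, χ (Fin.last k)`, the last one
being primitive. -/
theorem stmt14 {p m n k : ℕ} [NeZero (p ^ m)]
    (hp : p.Prime) (hnm : n < m)
    (χ : Fin (k + 1) → DirichletCharacter ℂ (p ^ m))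
    (hlast : (χ (Fin.last k)).IsPrimitive)
    -- χ₁⋯χ_k is not induced by any character mod p^(m-n)
    (h : ¬ (∏ i, χ i).FactorsThrough (p ^ (m - n))) :
    Jsum χ ((p ^ n : ℕ) : ZMod (p ^ m)) = 0 := by
  have hd : p ^ (m - n) ∣ p ^ m := pow_dvd_pow p (Nat.sub_le m n)
  rw [DirichletCharacter.factorsThrough_iff_ker_unitsMap hd] at h
  simp only [SetLike.le_def, not_forall] at h
  obtain ⟨u, hu1, hu2⟩ := h
  rw [MonoidHom.mem_ker] at hu1 hu2
  -- c := value of the product character at u, c ≠ 1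
  set B : ZMod (p ^ m) := ((p ^ n : ℕ) : ZMod (p ^ m)) with hB
  have hc : ((∏ i, χ i) (u : ZMod (p ^ m)) : ℂ) ≠ 1 := by
    intro hc
    apply hu2
    have : ((MulChar.equivToUnitHom (∏ i, χ i) u : ℂˣ) : ℂ) = ((1 : ℂˣ) : ℂ) := by
      rw [MulChar.coe_equivToUnitHom]; simpa using hc
    have := Units.ext this
    rwa [MulChar.toUnitHom_eq]
  -- key congruence: ↑u * B = B
  have hval : ((u : ZMod (p ^ m)).val : ℕ) ≡ 1 [MOD p ^ (m - n)] := by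
    have : (ZMod.castHom hd (ZMod (p ^ (m - n)))) (u : ZMod (p ^ m)) = 1 := by
      have := congrArg (Units.val) hu1
      simpa [ZMod.unitsMap_def] using this
    rw [ZMod.castHom_apply] at this
    have h2 : (((u : ZMod (p ^ m)).val : ℕ) : ZMod (p ^ (m - n))) = ((1 : ℕ) : ZMod (p ^ (m - n))) := by
      rw [ZMod.natCast_val, this]; simp
    exact (ZMod.natCast_eq_natCast_iff _ _ _).mp h2
  have hkey : (u : ZMod (p ^ m)) * B = B := by
    have h3 : ((u : ZMod (p ^ m)).val * p ^ n) ≡ 1 * p ^ n [MOD p ^ (m - n) * p ^ n] :=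
      hval.mul_right' _
    rw [← pow_add, Nat.sub_add_cancel hnm.le] at h3
    have h4 := (ZMod.natCast_eq_natCast_iff _ _ _).mpr h3
    push_cast at h4
    rw [ZMod.natCast_val, ZMod.cast_id, one_mul] at h4
    rw [hB]
    push_cast
    exact h4
  -- scaling bijection
  have hbij : Function.Bijective (fun x : Fin (k + 1) → ZMod (p ^ m) => fun i => (u : ZMod (p ^ m)) * x i) := by
    constructor
    · intro x y hxy
      funext i
      have := congrFun hxy i
      exact (Units.mul_right_inj u).mp this
    · intro y
      exact ⟨fun i => (↑u⁻¹ : ZMod (p ^ m)) * y i, by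
        funext i; simp [← mul_assoc, u.mul_inv]⟩
  set c : ℂ := (∏ i, χ i) (u : ZMod (p ^ m)) with hcdef
  have hcongr : ∀ x : Fin (k + 1) → ZMod (p ^ m),
      c * (if (∑ i, x i) = B then ∏ i, χ i (x i) else 0) =
      (if (∑ i, (u : ZMod (p ^ m)) * x i) = B then ∏ i, χ i ((u : ZMod (p ^ m)) * x i) else 0) := by
    intro x
    have hcond : (∑ i, (u : ZMod (p ^ m)) * x i) = B ↔ (∑ i, x i) = B := by
      rw [← Finset.mul_sum]
      constructor
      · intro hx
        have : (u : ZMod (p ^ m)) * (∑ i, x i) = (u : ZMod (p ^ m)) * B := by rw [hx, hkey]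
        exact (Units.mul_right_inj u).mp this
      · intro hx; rw [hx, hkey]
    by_cases hx : (∑ i, x i) = B
    · rw [if_pos hx, if_pos (hcond.mpr hx)]
      have he : ∏ i, χ i ((u : ZMod (p ^ m)) * x i) = (∏ i, χ i ↑u) * ∏ i, χ i (x i) := by
        rw [← Finset.prod_mul_distrib]
        exact Finset.prod_congr rfl fun i _ => map_mul (χ i) _ _
      rw [he, hcdef, mulchar_prod_apply_coe]
    · rw [if_neg hx, if_neg (fun hx' => hx (hcond.mp hx')), mul_zero]
  have hsum : c * Jsum χ B = Jsum χ B := by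
    conv_lhs => rw [Jsum, Finset.mul_sum]
    conv_rhs => rw [Jsum]
    exact Fintype.sum_bijective _ hbij _ _ hcongr
  have hz : (c - 1) * Jsum χ B = 0 := by ring_nf; linear_combination hsum
  rcases mul_eq_zero.mp hz with h1 | h1
  · exact absurd (sub_eq_zero.mp h1) hc
  · exact h1
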